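/- arXiv:1905.13387 — 2 statements merged into one kernel-verified Lean document; each statement's English description precedes it below -/
import Mathlib

section
/- The Sabidussi product distributes over the Zykov join: for finite simple graphs A, B, C, one has A ⋆ (B + C) ≅ (A ⋆ B) + (A ⋆ C). -/
open SimpleGraph

/-- The Zykov join of two graphs: disjoint union plus all cross edges. -/
def zykovJoin {α β : Type} (G : SimpleGraph α) (H : SimpleGraph β) :
    SimpleGraph (α ⊕ β) where
  Adj x y := (G.sum H).Adj x y ∨ x.isLeft ≠ y.isLeft
  symm := by
    constructor
    intro x y h
    rcases h with h | h
    · exact Or.inl ((G.sum H).adj_symm h)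
    · exact Or.inr (Ne.symm h)
  loopless := by
    constructor
    intro x h
    rcases h with h | h
    · exact (G.sum H).irrefl h
    · exact h rfl

/-- The Sabidussi product: vertices `(a,b)`, `(c,d)` are adjacent iff
`a ~ c` in `G` or `b ~ d` in `H`. -/
def sabidussi {α β : Type} (G : SimpleGraph α) (H : SimpleGraph β) :
    SimpleGraph (α × β) where
  Adj x y := G.Adj x.1 y.1 ∨ H.Adj x.2 y.2
  symm := ⟨fun _ _ h => h.imp (fun h => G.adj_symm h) (fun h => H.adj_symm h)⟩
  loopless := ⟨fun x h => h.elim (fun h => G.irrefl h) (fun h => H.irrefl h)⟩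

/-- The Sabidussi product distributes over the Zykov join. -/
theorem sabidussi_zykovJoin_distrib {α β γ : Type} [Fintype α] [Fintype β] [Fintype γ]
    (A : SimpleGraph α) (B : SimpleGraph β) (C : SimpleGraph γ) :
    Nonempty (sabidussi A (zykovJoin B C) ≃g
      zykovJoin (sabidussi A B) (sabidussi A C)) := by
  refine ⟨⟨Equiv.prodSumDistrib α β γ, ?_⟩⟩
  rintro ⟨a, b | b⟩ ⟨c, d | d⟩ <;>
    simp [sabidussi, zykovJoin, SimpleGraph.sum, Equiv.prodSumDistrib] <;> tauto
end

section
/- The class of Dehn–Sommerville graphs is closed under the Zykov join: if G ∈ X_d and H ∈ X_e, then G + H ∈ X_{d+e+1}, where the classes X_d are defined recursively by X_{-1} = {empty graph} and X_{d+1} = {G : χ(G) = 1 + (−1)^{d+1} and the sphere S(x) belongs to X_d for every vertex x}. -/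
open SimpleGraph

/-- `fVec G k` is the number of `(k+1)`-cliques of `G`. -/
noncomputable def fVec {α : Type} (G : SimpleGraph α) (k : ℕ) : ℕ :=
  Nat.card {s : Finset α // G.IsNClique (k + 1) s}

/-- The Euler characteristic of the clique complex of `G`:
`χ(G) = f₀ - f₁ + f₂ - ⋯`. -/
noncomputable def eulerChar {α : Type} (G : SimpleGraph α) : ℤ :=
  ∑ k ∈ Finset.range (Nat.card α), (-1 : ℤ) ^ k * fVec G k

/-- `DS m G` means that `G` belongs to the Dehn–Sommerville class `X_{m-1}`:
`X_{-1} = DS 0` consists of the empty graph, and `G ∈ X_d = DS (d+1)` iff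
`χ(G) = 1 + (-1)^d` and the sphere (link) of every vertex lies in `X_{d-1}`. -/
def DS : ℕ → {α : Type} → SimpleGraph α → Prop
  | 0, α, _ => IsEmpty α
  | n + 1, α, G =>
      eulerChar G = 1 + (-1 : ℤ) ^ n ∧
      ∀ x : α, DS n (G.induce (G.neighborSet x))

/-! ### Auxiliary lemmas -/

section Aux

open Finset

lemma isNClique_map_equiv {α β : Type} {G : SimpleGraph α} {G' : SimpleGraph β}
    (e : G ≃g G') (n : ℕ) (s : Finset α) :
    G'.IsNClique n (s.map e.toEquiv.toEmbedding) ↔ G.IsNClique n s := by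
  simp only [isNClique_iff, Finset.card_map, and_congr_left_iff]
  intro _
  constructor
  · intro h a ha b hb hab
    have hma : (e a : β) ∈ (s.map e.toEquiv.toEmbedding : Finset β) :=
      Finset.mem_map_of_mem _ ha
    have hmb : (e b : β) ∈ (s.map e.toEquiv.toEmbedding : Finset β) :=
      Finset.mem_map_of_mem _ hb
    have := h (Finset.mem_coe.2 hma) (Finset.mem_coe.2 hmb) (e.toEquiv.injective.ne hab)
    exact e.map_rel_iff.1 this
  · intro h x hx y hy hxy
    rw [Finset.mem_coe, Finset.mem_map] at hx hy
    obtain ⟨a, ha, rfl⟩ := hx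
    obtain ⟨b, hb, rfl⟩ := hy
    exact e.map_rel_iff.2 (h ha hb (fun hc => hxy (by rw [hc])))

lemma fVec_eq_of_iso {α β : Type} {G : SimpleGraph α} {G' : SimpleGraph β}
    (e : G ≃g G') (k : ℕ) : fVec G k = fVec G' k := by
  apply Nat.card_congr
  exact (e.toEquiv.finsetCongr.subtypeEquiv fun s => by
    simpa [Equiv.finsetCongr] using (isNClique_map_equiv e (k+1) s).symm)

lemma eulerChar_eq_of_iso {α β : Type} {G : SimpleGraph α} {G' : SimpleGraph β}
    (e : G ≃g G') : eulerChar G = eulerChar G' := by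
  unfold eulerChar
  rw [Nat.card_congr e.toEquiv]
  exact Finset.sum_congr rfl fun k _ => by rw [fVec_eq_of_iso e]

/-- An isomorphism of graphs induces an isomorphism of spheres. -/
def sphereIso {α β : Type} {G : SimpleGraph α} {G' : SimpleGraph β}
    (e : G ≃g G') (x : α) :
    (G.induce (G.neighborSet x)) ≃g (G'.induce (G'.neighborSet (e x))) where
  toEquiv := e.toEquiv.subtypeEquiv fun v => by
    simp [mem_neighborSet, e.map_adj_iff]
  map_rel_iff' := by
    rintro ⟨u, hu⟩ ⟨v, hv⟩
    simp [comap_adj, e.map_adj_iff]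

lemma DS_of_iso : ∀ (m : ℕ) {α β : Type} {G : SimpleGraph α} {G' : SimpleGraph β},
    (G ≃g G') → DS m G → DS m G'
  | 0, α, β, G, G', e, h => by
    haveI : IsEmpty α := h
    exact Function.isEmpty e.toEquiv.symm
  | m + 1, α, β, G, G', e, h => by
    obtain ⟨h1, h2⟩ := h
    refine ⟨by rw [← eulerChar_eq_of_iso e]; exact h1, fun y => ?_⟩
    exact DS_of_iso m (sphereIso e.symm y).symm (h2 (e.symm y))

open Classical in
/-- The alternating sum over all cliques (including the empty one); equals `1 - χ`. -/
noncomputable def cliqueSum {α : Type} [Fintype α] (G : SimpleGraph α) : ℤ :=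
  ∑ s ∈ Finset.univ.filter (fun s : Finset α => G.IsClique ↑s), (-1 : ℤ) ^ s.card

open Classical in
lemma fVec_eq_card {α : Type} [Fintype α] (G : SimpleGraph α) (k : ℕ) :
    (fVec G k : ℤ) = ((Finset.univ.filter (fun s : Finset α => G.IsNClique (k+1) s)).card : ℤ) := by
  unfold fVec
  rw [Nat.card_eq_fintype_card, Fintype.card_subtype]

open Classical in
lemma cliqueSum_eq {α : Type} [Fintype α] (G : SimpleGraph α) :
    cliqueSum G = 1 - eulerChar G := by
  classical
  unfold cliqueSum eulerChar
  have hmaps : ∀ s ∈ Finset.univ.filter (fun s : Finset α => G.IsClique ↑s),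
      s.card ∈ Finset.range (Fintype.card α + 1) :=
    fun s _ => Finset.mem_range.2 (Nat.lt_succ_of_le (Finset.card_le_univ s))
  rw [← Finset.sum_fiberwise_of_maps_to hmaps]
  have key : ∀ j, ∑ s ∈ (Finset.univ.filter (fun s : Finset α => G.IsClique ↑s)).filter
        (fun s => s.card = j), (-1 : ℤ) ^ s.card
      = (-1 : ℤ) ^ j * ((Finset.univ.filter (fun s : Finset α => G.IsNClique j s)).card : ℤ) := by
    intro j
    have hfil : (Finset.univ.filter (fun s : Finset α => G.IsClique ↑s)).filter
          (fun s => s.card = j)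
        = Finset.univ.filter (fun s : Finset α => G.IsNClique j s) := by
      ext s
      simp [isNClique_iff]
    rw [hfil]
    rw [Finset.sum_congr rfl (fun s hs => by
      have : s.card = j := ((Finset.mem_filter.1 hs).2).2
      rw [this])]
    rw [Finset.sum_const, nsmul_eq_mul, mul_comm]
  rw [Finset.sum_congr rfl (fun j _ => key j)]
  rw [Finset.sum_range_succ']
  have h0 : (Finset.univ.filter (fun s : Finset α => G.IsNClique 0 s)) = {∅} := by
    ext s
    simp [isNClique_iff, Finset.card_eq_zero, Set.Pairwise]
    rintro rfl; simp [SimpleGraph.IsClique]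
  rw [h0]
  simp only [pow_zero, one_mul, Finset.card_singleton, Nat.cast_one]
  rw [Nat.card_eq_fintype_card]
  have : ∀ k ∈ Finset.range (Fintype.card α),
      (-1:ℤ) ^ (k+1) * ((Finset.univ.filter (fun s : Finset α => G.IsNClique (k+1) s)).card : ℤ)
      = -((-1:ℤ) ^ k * (fVec G k : ℤ)) := by
    intro k _
    rw [fVec_eq_card, pow_succ]
    ring
  rw [Finset.sum_congr rfl this, Finset.sum_neg_distrib]
  ring

lemma zykovJoin_adj_ll {α β : Type} (G : SimpleGraph α) (H : SimpleGraph β) (a b : α) :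
    (zykovJoin G H).Adj (Sum.inl a) (Sum.inl b) ↔ G.Adj a b := by
  simp [zykovJoin]

lemma zykovJoin_adj_rr {α β : Type} (G : SimpleGraph α) (H : SimpleGraph β) (a b : β) :
    (zykovJoin G H).Adj (Sum.inr a) (Sum.inr b) ↔ H.Adj a b := by
  simp [zykovJoin]

lemma zykovJoin_adj_lr {α β : Type} (G : SimpleGraph α) (H : SimpleGraph β) (a : α) (b : β) :
    (zykovJoin G H).Adj (Sum.inl a) (Sum.inr b) := by
  simp [zykovJoin]

lemma zykovJoin_adj_rl {α β : Type} (G : SimpleGraph α) (H : SimpleGraph β) (a : β) (b : α) :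
    (zykovJoin G H).Adj (Sum.inr a) (Sum.inl b) := by
  simp [zykovJoin]

lemma isClique_zykovJoin {α β : Type} (G : SimpleGraph α) (H : SimpleGraph β)
    (u : Finset (α ⊕ β)) :
    (zykovJoin G H).IsClique ↑u ↔ G.IsClique ↑u.toLeft ∧ H.IsClique ↑u.toRight := by
  constructor
  · intro h
    constructor
    · intro a ha b hb hab
      have := h (by simpa using ha) (by simpa using hb) (by simpa)
      exact (zykovJoin_adj_ll G H a b).1 this
    · intro a ha b hb hab
      have := h (by simpa using ha) (by simpa using hb) (by simpa)
      exact (zykovJoin_adj_rr G H a b).1 this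
  · rintro ⟨h1, h2⟩ x hx y hy hxy
    match x, y with
    | Sum.inl a, Sum.inl b =>
      exact (zykovJoin_adj_ll G H a b).2
        (h1 (by simpa using hx) (by simpa using hy) (by simpa using hxy))
    | Sum.inl a, Sum.inr b => exact zykovJoin_adj_lr G H a b
    | Sum.inr a, Sum.inl b => exact zykovJoin_adj_rl G H a b
    | Sum.inr a, Sum.inr b =>
      exact (zykovJoin_adj_rr G H a b).2
        (h2 (by simpa using hx) (by simpa using hy) (by simpa using hxy))

open Classical in
lemma cliqueSum_zykovJoin {α β : Type} [Fintype α] [Fintype β]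
    (G : SimpleGraph α) (H : SimpleGraph β) :
    cliqueSum (zykovJoin G H) = cliqueSum G * cliqueSum H := by
  classical
  unfold cliqueSum
  rw [Finset.sum_mul_sum, ← Finset.sum_product']
  apply Finset.sum_nbij' (fun u => (u.toLeft, u.toRight)) (fun p => p.1.disjSum p.2)
  · intro u hu
    simp only [Finset.mem_filter, Finset.mem_univ, true_and] at hu
    simp only [Finset.mem_product, Finset.mem_filter, Finset.mem_univ, true_and]
    have := (isClique_zykovJoin G H u).1 hu
    exact ⟨this.1, this.2⟩
  · intro p hp
    simp only [Finset.mem_product, Finset.mem_filter, Finset.mem_univ, true_and] at hp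
    simp only [Finset.mem_filter, Finset.mem_univ, true_and]
    rw [isClique_zykovJoin, Finset.toLeft_disjSum, Finset.toRight_disjSum]
    exact ⟨hp.1, hp.2⟩
  · intro u _
    exact Finset.toLeft_disjSum_toRight
  · intro p _
    simp
  · intro u _
    have : u.card = u.toLeft.card + u.toRight.card := by
      conv_lhs => rw [← Finset.toLeft_disjSum_toRight (u := u)]
      exact Finset.card_disjSum _ _
    rw [this, pow_add]

/-- When `α` is empty, the join is isomorphic to `H`. -/
def joinIsoRight {α β : Type} [IsEmpty α] (G : SimpleGraph α) (H : SimpleGraph β) :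
    H ≃g zykovJoin G H where
  toEquiv := (Equiv.emptySum α β).symm
  map_rel_iff' := by
    intro u v
    exact zykovJoin_adj_rr G H u v

/-- When `β` is empty, the join is isomorphic to `G`. -/
def joinIsoLeft {α β : Type} [IsEmpty β] (G : SimpleGraph α) (H : SimpleGraph β) :
    G ≃g zykovJoin G H where
  toEquiv := (Equiv.sumEmpty α β).symm
  map_rel_iff' := by
    intro u v
    exact zykovJoin_adj_ll G H u v

/-- Sphere of a left vertex in a join. -/
def sphereJoinLeft {α β : Type} (G : SimpleGraph α) (H : SimpleGraph β) (a : α) :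
    ((zykovJoin G H).induce ((zykovJoin G H).neighborSet (Sum.inl a))) ≃g
      zykovJoin (G.induce (G.neighborSet a)) H where
  toEquiv :=
    { toFun := fun x => match x with
        | ⟨Sum.inl b, h⟩ => Sum.inl ⟨b, (zykovJoin_adj_ll G H a b).1 h⟩
        | ⟨Sum.inr c, _⟩ => Sum.inr c
      invFun := fun y => match y with
        | Sum.inl ⟨b, h⟩ => ⟨Sum.inl b, (zykovJoin_adj_ll G H a b).2 h⟩
        | Sum.inr c => ⟨Sum.inr c, zykovJoin_adj_lr G H a c⟩
      left_inv := by rintro ⟨x | x, h⟩ <;> rfl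
      right_inv := by rintro (⟨b, h⟩ | c) <;> rfl }
  map_rel_iff' := by
    rintro ⟨x | x, hx⟩ ⟨y | y, hy⟩
    · show (zykovJoin _ H).Adj (Sum.inl _) (Sum.inl _) ↔ _
      rw [zykovJoin_adj_ll]
      exact (zykovJoin_adj_ll G H x y).symm
    · exact iff_of_true (zykovJoin_adj_lr _ H _ y) (zykovJoin_adj_lr G H x y)
    · exact iff_of_true (zykovJoin_adj_rl _ H x _) (zykovJoin_adj_rl G H x y)
    · show (zykovJoin _ H).Adj (Sum.inr _) (Sum.inr _) ↔ _
      rw [zykovJoin_adj_rr]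
      exact (zykovJoin_adj_rr G H x y).symm

/-- Sphere of a right vertex in a join. -/
def sphereJoinRight {α β : Type} (G : SimpleGraph α) (H : SimpleGraph β) (b : β) :
    ((zykovJoin G H).induce ((zykovJoin G H).neighborSet (Sum.inr b))) ≃g
      zykovJoin G (H.induce (H.neighborSet b)) where
  toEquiv :=
    { toFun := fun x => match x with
        | ⟨Sum.inl c, _⟩ => Sum.inl c
        | ⟨Sum.inr c, h⟩ => Sum.inr ⟨c, (zykovJoin_adj_rr G H b c).1 h⟩
      invFun := fun y => match y with
        | Sum.inl c => ⟨Sum.inl c, zykovJoin_adj_rl G H b c⟩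
        | Sum.inr ⟨c, h⟩ => ⟨Sum.inr c, (zykovJoin_adj_rr G H b c).2 h⟩
      left_inv := by rintro ⟨x | x, h⟩ <;> rfl
      right_inv := by rintro (c | ⟨c, h⟩) <;> rfl }
  map_rel_iff' := by
    rintro ⟨x | x, hx⟩ ⟨y | y, hy⟩
    · show (zykovJoin G _).Adj (Sum.inl _) (Sum.inl _) ↔ _
      rw [zykovJoin_adj_ll]
      exact (zykovJoin_adj_ll G H x y).symm
    · exact iff_of_true (zykovJoin_adj_lr G _ x _) (zykovJoin_adj_lr G H x y)
    · exact iff_of_true (zykovJoin_adj_rl G _ _ y) (zykovJoin_adj_rl G H x y)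
    · show (zykovJoin G _).Adj (Sum.inr _) (Sum.inr _) ↔ _
      rw [zykovJoin_adj_rr]
      exact (zykovJoin_adj_rr G H x y).symm

lemma DS_zykovJoin_aux : ∀ (k m n : ℕ) {α β : Type} [Fintype α] [Fintype β]
    (G : SimpleGraph α) (H : SimpleGraph β), m + n ≤ k →
    DS m G → DS n H → DS (m + n) (zykovJoin G H) := by
  intro k
  induction k with
  | zero =>
    intro m n α β _ _ G H hle hG hH
    obtain ⟨rfl, rfl⟩ : m = 0 ∧ n = 0 := by omega
    haveI : IsEmpty α := hG
    exact DS_of_iso 0 (joinIsoRight G H) hH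
  | succ k ih =>
    intro m n α β _ _ G H hle hG hH
    match m, n with
    | 0, n =>
      haveI : IsEmpty α := hG
      rw [Nat.zero_add]
      exact DS_of_iso n (joinIsoRight G H) hH
    | m + 1, 0 =>
      haveI : IsEmpty β := hH
      have := DS_of_iso (m + 1) (joinIsoLeft G H) hG
      simpa using this
    | m + 1, n + 1 =>
      have hG' := hG
      have hH' := hH
      obtain ⟨hG1, hG2⟩ := hG
      obtain ⟨hH1, hH2⟩ := hH
      refine ⟨?_, ?_⟩
      · have hcG : cliqueSum G = -(-1 : ℤ) ^ m := by
          rw [cliqueSum_eq, hG1]; ring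
        have hcH : cliqueSum H = -(-1 : ℤ) ^ n := by
          rw [cliqueSum_eq, hH1]; ring
        have := cliqueSum_eq (zykovJoin G H)
        rw [cliqueSum_zykovJoin, hcG, hcH] at this
        have h2 : eulerChar (zykovJoin G H) = 1 - (-1:ℤ)^m * (-1:ℤ)^n := by linarith
        rw [h2]
        simp only [Nat.add_eq]
        rw [pow_add, pow_add, pow_one]
        ring
      · rintro (a | b)
        · haveI : Fintype ↥(G.neighborSet a) := Fintype.ofFinite _
          have hs := hG2 a
          have hjoin := ih m (n + 1) (G.induce (G.neighborSet a)) H (by omega) hs hH'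
          have := DS_of_iso (m + (n + 1)) (sphereJoinLeft G H a).symm hjoin
          rwa [show m + (n + 1) = m + 1 + n by omega] at this
        · haveI : Fintype ↥(H.neighborSet b) := Fintype.ofFinite _
          have hs := hH2 b
          have hjoin := ih (m + 1) n G (H.induce (H.neighborSet b)) (by omega) hG' hs
          have := DS_of_iso (m + 1 + n) (sphereJoinRight G H b).symm hjoin
          exact this

end Aux

/-- The Dehn–Sommerville classes are closed under the Zykov join:
if `G ∈ X_{m-1}` and `H ∈ X_{n-1}`, then `G + H ∈ X_{(m-1)+(n-1)+1}`,
i.e. `DS m G → DS n H → DS (m+n) (G + H)`. -/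
theorem DS_zykovJoin {α β : Type} [Fintype α] [Fintype β]
    (G : SimpleGraph α) (H : SimpleGraph β) (m n : ℕ)
    (hG : DS m G) (hH : DS n H) : DS (m + n) (zykovJoin G H) := by
  exact DS_zykovJoin_aux (m + n) m n G H le_rfl hG hH
end
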